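/- If the points z_k = e^{i 2πk/N} for k ∈ {0,…,N−1} are evenly spaced on S¹ (so Δ_i = 2π/N for all i), then E[(1 − max_k Re(Z* z_k))²] = 3/2 + (N/(4π))( sin(2π/N) − 8 sin(π/N) ), and this quantity is O(1/N⁴) as N → ∞. -/

import Mathlib

open MeasureTheory Real

noncomputable section

/-- `G_max(θ) := max_k Re( conj(e^{iθ}) z_k )` where `z_k = e^{i t_k}`. -/
def gmax (N : ℕ) (t : Fin N → ℝ) (θ : ℝ) : ℝ :=
  ⨆ k : Fin N,
    ((starRingEnd ℂ) (Complex.exp (θ * Complex.I)) * Complex.exp ((t k : ℂ) * Complex.I)).re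

/-- Evenly spaced points `t_k = 2πk/N`. -/
def teven (N : ℕ) : Fin N → ℝ := fun k => 2 * π * k / N

/-- The resulting expected squared gap, as a function of `N`. -/
def evalN (N : ℕ) : ℝ :=
  3 / 2 + ((N : ℝ) / (4 * π)) * (Real.sin (2 * π / N) - 8 * Real.sin (π / N))

lemma aux_nonneg (f f' : ℝ → ℝ) (hf : ∀ x, HasDerivAt f (f' x) x) (h0 : f 0 = 0)
    (hd : ∀ x, 0 ≤ x → 0 ≤ f' x) {x : ℝ} (hx : 0 ≤ x) : 0 ≤ f x := by
  have hmono : MonotoneOn f (Set.Ici 0) :=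
    monotoneOn_of_deriv_nonneg (convex_Ici 0)
      (fun y _ => (hf y).continuousAt.continuousWithinAt)
      (fun y _ => (hf y).differentiableAt.differentiableWithinAt)
      (fun y hy => by
        rw [(hf y).deriv]
        exact hd y (le_of_lt (by simpa using hy)))
  have := hmono (Set.self_mem_Ici) (Set.mem_Ici.2 hx) hx
  rwa [h0] at this

lemma sin_taylor_lb {x : ℝ} (hx : 0 ≤ x) : x - x ^ 3 / 6 ≤ sin x := by
  have := aux_nonneg (fun y => sin y - (y - y ^ 3 / 6)) (fun y => cos y - (1 - y ^ 2 / 2))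
    (fun y => by
      have h1 := Real.hasDerivAt_sin y
      have h2 : HasDerivAt (fun y : ℝ => y - y ^ 3 / 6) (1 - y ^ 2 / 2) y := by
        have := ((hasDerivAt_id y).sub (((hasDerivAt_pow 3 y).div_const 6)))
        exact this.congr_deriv (by norm_num [sub_eq_add_neg]; ring)
      exact h1.sub h2)
    (by norm_num)
    (fun y _ => sub_nonneg.2 (Real.one_sub_sq_div_two_le_cos)) hx
  linarith

lemma cos_taylor_ub {x : ℝ} (hx : 0 ≤ x) : cos x ≤ 1 - x ^ 2 / 2 + x ^ 4 / 24 := by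
  have := aux_nonneg (fun y => (1 - y ^ 2 / 2 + y ^ 4 / 24) - cos y)
    (fun y => (y ^ 3 / 6 - y) + sin y)
    (fun y => by
      have h1 := Real.hasDerivAt_cos y
      have h2 : HasDerivAt (fun y : ℝ => 1 - y ^ 2 / 2 + y ^ 4 / 24) (y ^ 3 / 6 - y) y := by
        have := (((hasDerivAt_const y (1:ℝ)).sub ((hasDerivAt_pow 2 y).div_const 2)).add
          ((hasDerivAt_pow 4 y).div_const 24))
        exact this.congr_deriv (by norm_num [sub_eq_add_neg]; ring)
      have := h2.sub h1
      exact this.congr_deriv (by ring))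
    (by norm_num)
    (fun y hy => by have := sin_taylor_lb hy; linarith) hx
  linarith

lemma sin_taylor_ub {x : ℝ} (hx : 0 ≤ x) : sin x ≤ x - x ^ 3 / 6 + x ^ 5 / 120 := by
  have := aux_nonneg (fun y => (y - y ^ 3 / 6 + y ^ 5 / 120) - sin y)
    (fun y => (1 - y ^ 2 / 2 + y ^ 4 / 24) - cos y)
    (fun y => by
      have h1 := Real.hasDerivAt_sin y
      have h2 : HasDerivAt (fun y : ℝ => y - y ^ 3 / 6 + y ^ 5 / 120)
          (1 - y ^ 2 / 2 + y ^ 4 / 24) y := by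
        have := (((hasDerivAt_id y).sub ((hasDerivAt_pow 3 y).div_const 6)).add
          ((hasDerivAt_pow 5 y).div_const 120))
        exact this.congr_deriv (by norm_num [sub_eq_add_neg]; ring)
      exact h2.sub h1)
    (by norm_num)
    (fun y hy => by have := cos_taylor_ub hy; linarith) hx
  linarith

lemma sin_taylor_bound {x : ℝ} (hx : 0 ≤ x) : |sin x - (x - x ^ 3 / 6)| ≤ x ^ 5 / 120 := by
  rw [abs_le]
  constructor
  · have := sin_taylor_lb hx
    have : 0 ≤ x ^ 5 / 120 := by positivity
    linarith [sin_taylor_lb hx]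
  · linarith [sin_taylor_ub hx]

lemma gmax_cos (N : ℕ) (t : Fin N → ℝ) (θ : ℝ) :
    gmax N t θ = ⨆ k : Fin N, Real.cos (t k - θ) := by
  unfold gmax
  congr 1; funext k
  rw [← Complex.exp_conj, ← Complex.exp_add]
  have : (starRingEnd ℂ) ((θ:ℂ) * Complex.I) + (t k : ℂ) * Complex.I
      = ((t k - θ : ℝ) : ℂ) * Complex.I := by
    simp [map_mul, Complex.conj_ofReal, Complex.conj_I]
    ring
  rw [this, Complex.exp_ofReal_mul_I_re]

lemma cos_add_le {N : ℕ} (hN : 0 < N) {u : ℝ} (hu : |u| ≤ π / N) (m : ℤ) :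
    Real.cos (u + 2 * π * m / N) ≤ Real.cos u := by
  have hNR : (0:ℝ) < N := by exact_mod_cast hN
  have hN1 : (1:ℝ) ≤ N := by exact_mod_cast hN
  have hπ := Real.pi_pos
  have hπN : 0 < π / N := by positivity
  have hπNπ : π / N ≤ π := by
    rw [div_le_iff₀ hNR]; nlinarith
  obtain ⟨q, r, hr0, hrN, hm⟩ : ∃ q r : ℤ, 0 ≤ r ∧ r < N ∧ m = N * q + r :=
    ⟨m / N, m % N, Int.emod_nonneg m (by exact_mod_cast hN.ne'),
      Int.emod_lt_of_pos m (by exact_mod_cast hN), (Int.mul_ediv_add_emod m N).symm⟩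
  have harg : u + 2 * π * m / N = (u + 2 * π * r / N) + q * (2 * π) := by
    rw [hm]; push_cast; field_simp; ring
  rw [harg, Real.cos_add_int_mul_two_pi]
  rcases eq_or_lt_of_le hr0 with hr | hr
  · simp [← hr]
  · have hr1 : (1:ℝ) ≤ r := by exact_mod_cast hr
    have hrN' : (r:ℝ) ≤ N - 1 := by
      exact_mod_cast (show r ≤ (N:ℤ) - 1 by omega)
    obtain ⟨hab1, hab2⟩ := abs_le.1 hu
    have hx1 : π / N ≤ u + 2 * π * r / N := by
      have h2 : 2 * π * 1 / N ≤ 2 * π * r / N := by gcongr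
      have h2' : 2 * π * 1 / N = 2 * (π / N) := by ring
      linarith
    have hx2 : u + 2 * π * r / N ≤ 2 * π - π / N := by
      have h2 : 2 * π * r / N ≤ 2 * π * (N - 1) / N := by gcongr
      have h3 : 2 * π * (N - 1) / N = 2 * π - 2 * (π / N) := by field_simp
      rw [h3] at h2
      linarith
    have hcu : Real.cos (π / N) ≤ Real.cos u := by
      rw [← Real.cos_abs u]
      exact Real.cos_le_cos_of_nonneg_of_le_pi (abs_nonneg u) hπNπ hu
    have hcx : Real.cos (u + 2 * π * r / N) ≤ Real.cos (π / N) := by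
      rcases le_total (u + 2 * π * r / N) π with hle | hge
      · exact Real.cos_le_cos_of_nonneg_of_le_pi hπN.le hle hx1
      · rw [show u + 2 * π * r / N = 2 * π - (2 * π - (u + 2 * π * r / N)) by ring,
          Real.cos_two_pi_sub]
        exact Real.cos_le_cos_of_nonneg_of_le_pi hπN.le (by linarith) (by linarith)
    linarith

lemma sup_cos {N : ℕ} (hN : 0 < N) (j : ℤ) {u : ℝ} (hu : |u| ≤ π / N) :
    (⨆ k : Fin N, Real.cos (teven N k - (2 * π * j / N + u))) = Real.cos u := by
  have hNR : (0:ℝ) < N := by exact_mod_cast hN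
  have hterm : ∀ k : Fin N,
      Real.cos (teven N k - (2 * π * j / N + u)) = Real.cos (u + 2 * π * ((j : ℝ) - k) / N) := by
    intro k
    rw [show teven N k - (2 * π * j / N + u) = -(u + 2 * π * ((j:ℝ) - k) / N) by
      unfold teven; push_cast; field_simp; ring, Real.cos_neg]
  haveI : Nonempty (Fin N) := ⟨⟨0, hN⟩⟩
  apply le_antisymm
  · apply ciSup_le
    intro k
    rw [hterm k]
    have := cos_add_le hN hu (j - k)
    push_cast at this
    convert this using 3
  · -- witness k = (j % N).toNat
    have hjN : ((j % N : ℤ).toNat : ℤ) = j % N :=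
      Int.toNat_of_nonneg (Int.emod_nonneg j (by exact_mod_cast hN.ne'))
    have hlt : (j % N).toNat < N := by
      have := Int.emod_lt_of_pos j (show (0:ℤ) < N by exact_mod_cast hN)
      omega
    have hbdd : BddAbove (Set.range fun k : Fin N =>
        Real.cos (teven N k - (2 * π * j / N + u))) :=
      (Set.finite_range _).bddAbove
    have := le_ciSup hbdd (⟨(j % N).toNat, hlt⟩ : Fin N)
    refine le_trans (le_of_eq ?_) this
    rw [hterm]
    have h2' : j - j % N = N * (j / N) := by linarith [Int.mul_ediv_add_emod j N]
    set q : ℤ := j / (N:ℤ) with hqdef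
    have hq : (j : ℝ) - ((j % N).toNat : ℝ) = (N : ℝ) * q := by
      have hc : ((j % N).toNat : ℝ) = ((j % (N:ℤ) : ℤ) : ℝ) := by exact_mod_cast hjN
      rw [hc]
      exact_mod_cast congrArg (Int.cast : ℤ → ℝ) h2'
    have : u + 2 * π * ((j : ℝ) - ((⟨(j % N).toNat, hlt⟩ : Fin N) : ℕ)) / N
        = u + q * (2 * π) := by
      simp only [Fin.val_mk]
      rw [hq]; field_simp
    rw [this, Real.cos_add_int_mul_two_pi]

lemma sup_cos' {N : ℕ} (hN : 0 < N) (j : ℤ) {θ : ℝ} (hu : |θ - 2 * π * j / N| ≤ π / N) :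
    (⨆ k : Fin N, Real.cos (teven N k - θ)) = Real.cos (θ - 2 * π * j / N) := by
  have h := sup_cos hN j (u := θ - 2 * π * j / N) hu
  rwa [show 2 * π * j / N + (θ - 2 * π * j / N) = θ by ring] at h

lemma int_sq (δ : ℝ) :
    ∫ u in (-δ)..δ, (1 - Real.cos u) ^ 2
      = 3 * δ - 4 * Real.sin δ + Real.sin δ * Real.cos δ := by
  have h : ∀ u : ℝ, (1 - Real.cos u) ^ 2 = 1 - 2 * Real.cos u + Real.cos u ^ 2 :=
    fun u => by ring
  simp_rw [h]
  rw [intervalIntegral.integral_add (f := fun u => 1 - 2 * Real.cos u) (g := fun u => Real.cos u ^ 2) ((continuous_const.sub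
      (continuous_const.mul Real.continuous_cos)).intervalIntegrable _ _)
      ((Real.continuous_cos.pow 2).intervalIntegrable _ _),
    intervalIntegral.integral_sub (f := fun _ => (1:ℝ)) (g := fun u => 2 * Real.cos u) (intervalIntegrable_const)
      ((continuous_const.mul Real.continuous_cos).intervalIntegrable _ _),
    intervalIntegral.integral_const_mul, integral_cos, integral_cos_sq,
    intervalIntegral.integral_const]
  simp [Real.sin_neg, Real.cos_neg]
  ring

lemma part1 (N : ℕ) (hN : 0 < N) :
    (1 / (2 * π)) * ∫ θ in Set.Ico (0 : ℝ) (2 * π), (1 - gmax N (teven N) θ) ^ 2 =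
      evalN N := by
  have hNR : (0 : ℝ) < N := by exact_mod_cast hN
  have hπ := Real.pi_pos
  set g : ℝ → ℝ := fun θ => (1 - gmax N (teven N) θ) ^ 2 with hg
  set a : ℕ → ℝ := fun j => 2 * π * j / N - π / N with ha
  set c : ℝ := 3 * (π / N) - 4 * Real.sin (π / N) + Real.sin (π / N) * Real.cos (π / N)
    with hc
  have hper : Function.Periodic g (2 * π) := by
    intro θ
    simp only [hg, gmax_cos]
    congr 2
    apply iSup_congr
    intro k
    rw [show teven N k - (θ + 2 * π) = (teven N k - θ) - 2 * π by ring,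
      Real.cos_sub_two_pi]
  have heq : ∀ j : ℕ, Set.EqOn g
      (fun θ => (1 - Real.cos (θ - 2 * π * j / N)) ^ 2) (Set.uIcc (a j) (a (j + 1))) := by
    intro j θ hθ
    have haj : a j ≤ a (j + 1) := by
      simp only [ha]
      push_cast
      have : 2 * π * j / N ≤ 2 * π * (j + 1) / N := by gcongr <;> linarith
      linarith
    rw [Set.uIcc_of_le haj] at hθ
    obtain ⟨h1, h2⟩ := hθ
    have hu : |θ - 2 * π * j / N| ≤ π / N := by
      rw [abs_le]
      constructor
      · simp only [ha] at h1; linarith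
      · simp only [ha] at h2; push_cast at h2
        have : 2 * π * ((j:ℝ) + 1) / N = 2 * π * j / N + 2 * (π / N) := by
          field_simp
        rw [this] at h2; linarith
    simp only [hg, gmax_cos]
    have hu' : |θ - 2 * π * ((j : ℤ) : ℝ) / N| ≤ π / N := by push_cast; exact hu
    have := sup_cos' hN (j : ℤ) hu'
    push_cast at this
    rw [this]
  have hint : ∀ j, j < N → IntervalIntegrable g volume (a j) (a (j + 1)) := by
    intro j _
    have hcont : Continuous fun θ => (1 - Real.cos (θ - 2 * π * j / N)) ^ 2 := by
      fun_prop
    have h0 := (hcont.intervalIntegrable (μ := volume) (a j) (a (j + 1)))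
    rw [intervalIntegrable_iff] at h0 ⊢
    exact h0.congr_fun
      (fun θ hθ => ((heq j) (Set.uIoc_subset_uIcc hθ)).symm) measurableSet_uIoc
  have e1 : ∫ θ in Set.Ico (0 : ℝ) (2 * π), g θ = ∫ θ in (0 : ℝ)..(2 * π), g θ := by
    rw [intervalIntegral.integral_of_le Real.two_pi_pos.le,
      Measure.restrict_congr_set Ico_ae_eq_Ioc]
  have e2 : ∫ θ in (0 : ℝ)..(2 * π), g θ = ∫ θ in (a 0)..(a 0 + 2 * π), g θ := by
    have := hper.intervalIntegral_add_eq 0 (a 0)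
    simpa using this
  have ea : a 0 + 2 * π = a N := by
    simp only [ha]
    push_cast
    field_simp
    ring
  have e3 : ∫ θ in (a 0)..(a N), g θ = ∑ j ∈ Finset.range N, ∫ θ in (a j)..(a (j + 1)), g θ :=
    (intervalIntegral.sum_integral_adjacent_intervals hint).symm
  have e4 : ∀ j : ℕ, ∫ θ in (a j)..(a (j + 1)), g θ = c := by
    intro j
    rw [intervalIntegral.integral_congr (heq j)]
    have hcomp := intervalIntegral.integral_comp_sub_right
      (a := a j) (b := a (j + 1)) (fun u => (1 - Real.cos u) ^ 2) (2 * π * j / N)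
    have hl : a j - 2 * π * j / N = -(π / N) := by simp [ha]
    have hr : a (j + 1) - 2 * π * j / N = π / N := by
      simp only [ha]; push_cast; field_simp; ring
    rw [hl, hr] at hcomp
    rw [hcomp, int_sq]
  have etotal : ∫ θ in Set.Ico (0 : ℝ) (2 * π), g θ = N * c := by
    rw [e1, e2, ea, e3]
    rw [Finset.sum_congr rfl (fun j _ => e4 j), Finset.sum_const, Finset.card_range,
      nsmul_eq_mul]
  rw [show (∫ θ in Set.Ico (0 : ℝ) (2 * π), (1 - gmax N (teven N) θ) ^ 2)
      = ∫ θ in Set.Ico (0 : ℝ) (2 * π), g θ from rfl, etotal, evalN]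
  have hsin2 : Real.sin (2 * π / N) = 2 * Real.sin (π / N) * Real.cos (π / N) := by
    rw [show 2 * π / (N:ℝ) = 2 * (π / N) by ring, Real.sin_two_mul]
  rw [hsin2, hc]
  field_simp
  ring

lemma evalN_bound {N : ℕ} (hN : 1 ≤ N) : |evalN N| ≤ π ^ 4 / 12 * (1 / (N : ℝ) ^ 4) := by
  have hNR : (0 : ℝ) < N := by exact_mod_cast hN
  have hπ := Real.pi_pos
  set a : ℝ := π / N with ha
  have hapos : 0 < a := by positivity
  have key : evalN N = ((N : ℝ) / (4 * π)) *
      ((Real.sin (2 * a) - (2 * a - (2 * a) ^ 3 / 6))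
        - 8 * (Real.sin a - (a - a ^ 3 / 6))) := by
    rw [evalN, show 2 * π / (N:ℝ) = 2 * a by rw [ha]; ring, ha]
    field_simp
    ring
  rw [key, abs_mul]
  have hb1 := sin_taylor_bound hapos.le
  have hb2 := sin_taylor_bound (by positivity : (0:ℝ) ≤ 2 * a)
  have habs : |(Real.sin (2 * a) - (2 * a - (2 * a) ^ 3 / 6))
      - 8 * (Real.sin a - (a - a ^ 3 / 6))| ≤ (2 * a) ^ 5 / 120 + 8 * (a ^ 5 / 120) := by
    refine (abs_sub _ _).trans ?_
    gcongr
    rw [abs_mul]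
    simp only [abs_of_nonneg (by norm_num : (0:ℝ) ≤ 8)]
    gcongr
  have hfac : |(N : ℝ) / (4 * π)| = (N : ℝ) / (4 * π) := abs_of_nonneg (by positivity)
  rw [hfac]
  have hcalc : (N : ℝ) / (4 * π) * ((2 * a) ^ 5 / 120 + 8 * (a ^ 5 / 120))
      = π ^ 4 / 12 * (1 / (N : ℝ) ^ 4) := by
    rw [ha]; field_simp; ring
  calc (N : ℝ) / (4 * π) * |(Real.sin (2 * a) - (2 * a - (2 * a) ^ 3 / 6))
        - 8 * (Real.sin a - (a - a ^ 3 / 6))|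
      ≤ (N : ℝ) / (4 * π) * ((2 * a) ^ 5 / 120 + 8 * (a ^ 5 / 120)) := by gcongr
    _ = π ^ 4 / 12 * (1 / (N : ℝ) ^ 4) := hcalc

lemma part2 : evalN =O[Filter.atTop] fun N : ℕ => 1 / (N : ℝ) ^ 4 := by
  rw [Asymptotics.isBigO_iff]
  refine ⟨π ^ 4 / 12, ?_⟩
  filter_upwards [Filter.eventually_ge_atTop 1] with N hN
  rw [Real.norm_eq_abs, Real.norm_eq_abs, abs_of_nonneg (by positivity : (0:ℝ) ≤ 1 / (N:ℝ)^4)]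
  exact evalN_bound hN

/-- for evenly spaced `z_k = e^{2πik/N}`,
`E[(1 − max_k Re(Z* z_k))²] = 3/2 + (N/(4π))(sin(2π/N) − 8 sin(π/N))`,
and this quantity is `O(1/N⁴)` as `N → ∞`. -/
theorem stmt12 :
    (∀ N : ℕ, 0 < N →
      (1 / (2 * π)) * ∫ θ in Set.Ico (0 : ℝ) (2 * π), (1 - gmax N (teven N) θ) ^ 2 =
        evalN N) ∧
    evalN =O[Filter.atTop] fun N : ℕ => 1 / (N : ℝ) ^ 4 :=
  ⟨fun N hN => part1 N hN, part2⟩
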